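/- Let j ≥ 0 and k ≥ 1 be integers, and work in the polynomial ring S = K[x,y,z] over a field K. Define f_{k+j} = ∑_{i=0}^{k+j−1} y^i (−z)^{k+j−1−i} and g_k = −∑_{i=0}^{k−1} C(k,i) x^i (y+z)^{k−1−i}. Then −f_{k+j}·x^k + g_k·y^{k+j} + (−1)^{k+j+1} g_k·z^{k+j} + f_{k+j}·(x+y+z)^k = 0 in S. -/

import Mathlib

open MvPolynomial

/-- In `S = K[x,y,z]`, with `f_{k+j} = ∑_{i<k+j} y^i (-z)^{k+j-1-i}` and
`g_k = -∑_{i<k} C(k,i) x^i (y+z)^{k-1-i}`, the tuple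
`(-f_{k+j}, g_k, (-1)^{k+j+1} g_k, f_{k+j})` is a syzygy on
`(x^k, y^{k+j}, z^{k+j}, (x+y+z)^k)`. -/
theorem syzygy_identity (K : Type*) [Field K] (j k : ℕ) (hk : 1 ≤ k) :
    let x : MvPolynomial (Fin 3) K := X 0
    let y : MvPolynomial (Fin 3) K := X 1
    let z : MvPolynomial (Fin 3) K := X 2
    let f : MvPolynomial (Fin 3) K :=
      ∑ i ∈ Finset.range (k + j), y ^ i * (-z) ^ (k + j - 1 - i)
    let g : MvPolynomial (Fin 3) K :=
      -(∑ i ∈ Finset.range k, (k.choose i : MvPolynomial (Fin 3) K) * x ^ i * (y + z) ^ (k - 1 - i))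
    (-f) * x ^ k + g * y ^ (k + j) + (-1) ^ (k + j + 1) * g * z ^ (k + j)
      + f * (x + y + z) ^ k = 0 := by
  intro x y z f g
  have hf : f * (y - (-z)) = y ^ (k + j) - (-z) ^ (k + j) := geom_sum₂_mul y (-z) (k + j)
  have hg : (x + y + z) ^ k - x ^ k = (y + z) * (-g) := by
    have h1 : (x + y + z) ^ k
        = ∑ i ∈ Finset.range (k + 1),
            x ^ i * (y + z) ^ (k - i) * (k.choose i : MvPolynomial (Fin 3) K) := by
      rw [show x + y + z = x + (y + z) by ring, add_pow]
    rw [Finset.sum_range_succ] at h1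
    simp only [Nat.sub_self, pow_zero, Nat.choose_self, Nat.cast_one, mul_one] at h1
    have h2 : ∀ i ∈ Finset.range k,
        x ^ i * (y + z) ^ (k - i) * (k.choose i : MvPolynomial (Fin 3) K)
          = (y + z) * ((k.choose i : MvPolynomial (Fin 3) K) * x ^ i * (y + z) ^ (k - 1 - i)) := by
      intro i hi
      rw [Finset.mem_range] at hi
      rw [show k - i = (k - 1 - i) + 1 by omega, pow_succ]
      ring
    rw [Finset.sum_congr rfl h2, ← Finset.mul_sum] at h1
    simp only [g, neg_neg]
    linear_combination h1
  have hmz : (-1 : MvPolynomial (Fin 3) K) ^ (k + j + 1) * z ^ (k + j)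
      = -(-z) ^ (k + j) := by
    rw [neg_pow z, pow_succ]; ring
  linear_combination (-g) * hf + f * hg + g * hmz
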